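/- For every complex number $a$ in the closed upper half unit disk $\overline{\mathbb{D}^+} = \{z : |z| \le 1, \operatorname{Im} z \ge 0\}$, one has $2(\sqrt{2}-1) \le |(a+1)^2 + i(a-1)^2| \le 8$. -/

import Mathlib

open Complex

theorem stmt_0 (a : ℂ) (h1 : ‖a‖ ≤ 1) (h2 : 0 ≤ a.im) :
    2 * (Real.sqrt 2 - 1) ≤ ‖(a + 1) ^ 2 + I * (a - 1) ^ 2‖ ∧
    ‖(a + 1) ^ 2 + I * (a - 1) ^ 2‖ ≤ 8 := by
  set r : ℝ := Real.sqrt 2 with hrdef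
  have hr2 : r ^ 2 = 2 := Real.sq_sqrt (by norm_num)
  have hr1 : 1 ≤ r := by nlinarith [Real.sqrt_nonneg 2]
  have hr2' : ((r : ℂ)) ^ 2 = 2 := by exact_mod_cast hr2
  have key : (a + 1) ^ 2 + I * (a - 1) ^ 2
      = (1 + I) * (a - I * ((1 + r : ℝ) : ℂ)) * (a + I * ((r - 1 : ℝ) : ℂ)) := by
    push_cast
    linear_combination (2 * a + 1 + I) * Complex.I_sq + (1 + I) * I ^ 2 * hr2'
  constructor
  · rw [key, norm_mul, norm_mul]
    have habs1 : ‖1 + I‖ = r := by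
      have h := Complex.norm_add_mul_I 1 1
      norm_num at h
      rw [h, hrdef]
    have h3 : r ≤ ‖a - I * ((1 + r : ℝ) : ℂ)‖ := by
      have hb : ‖I * ((1 + r : ℝ) : ℂ)‖ = 1 + r := by
        rw [norm_mul, Complex.norm_I, Complex.norm_real, one_mul,
          Real.norm_of_nonneg (by linarith : (0:ℝ) ≤ 1 + r)]
      have := norm_sub_norm_le (I * ((1 + r : ℝ) : ℂ)) a
      rw [hb] at this
      calc r = (1 + r) - 1 := by ring
        _ ≤ ‖I * ((1 + r : ℝ) : ℂ)‖ - ‖a‖ := by rw [hb]; linarith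
        _ ≤ ‖I * ((1 + r : ℝ) : ℂ) - a‖ := by
            have := norm_sub_norm_le (I * ((1 + r : ℝ) : ℂ)) a
            simpa using this
        _ = ‖a - I * ((1 + r : ℝ) : ℂ)‖ := norm_sub_rev _ _
    have h4 : r - 1 ≤ ‖a + I * ((r - 1 : ℝ) : ℂ)‖ := by
      have him : (a + I * ((r - 1 : ℝ) : ℂ)).im = a.im + (r - 1) := by simp
      have := Complex.abs_im_le_norm (a + I * ((r - 1 : ℝ) : ℂ))
      rw [him] at this
      have : a.im + (r - 1) ≤ ‖a + I * ((r - 1 : ℝ) : ℂ)‖ :=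
        le_trans (le_abs_self _) this
      linarith
    calc 2 * (r - 1) = r * r * (r - 1) := by nlinarith
      _ ≤ r * ‖a - I * ((1 + r : ℝ) : ℂ)‖ * ‖a + I * ((r - 1 : ℝ) : ℂ)‖ := by
          gcongr <;> linarith
      _ = ‖1 + I‖ * ‖a - I * ((1 + r : ℝ) : ℂ)‖ *
            ‖a + I * ((r - 1 : ℝ) : ℂ)‖ := by rw [habs1]
  · have hb1 : ‖a + 1‖ ≤ 2 := by
      calc ‖a + 1‖ ≤ ‖a‖ + ‖1‖ := norm_add_le _ _
        _ ≤ 2 := by simp; linarith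
    have hb2 : ‖a - 1‖ ≤ 2 := by
      calc ‖a - 1‖ ≤ ‖a‖ + ‖(1 : ℂ)‖ := by
            simpa using norm_sub_le a 1
        _ ≤ 2 := by simp; linarith
    calc ‖(a + 1) ^ 2 + I * (a - 1) ^ 2‖
        ≤ ‖(a + 1) ^ 2‖ + ‖I * (a - 1) ^ 2‖ := norm_add_le _ _
      _ = ‖a + 1‖ ^ 2 + ‖a - 1‖ ^ 2 := by
          simp [norm_mul, norm_pow]
      _ ≤ 2 ^ 2 + 2 ^ 2 := by
          gcongr <;> first | exact norm_nonneg _ | assumption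
      _ = 8 := by norm_num
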